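/- Let g = k ⊕ p be a Cartan decomposition of a real semisimple Lie algebra with inner product B_θ, and let z_0 ∈ z(k) satisfy ad(z_0)²|_p = -id_p. For Z ∈ p, write Λ_0 for the element of k* dual to z_0, and define Φ(Z) ∈ k* by ⟨Φ(Z), X⟩ = B_θ(z_0, Σ_{k≥0} ad(Z)^{2k}/(2k)! X) for X ∈ k (i.e., Φ(Z) = (exp(Z)·Λ_0)|_k). Then ⟨Φ(Z) - Λ_0, z_0⟩ ≥ (1/2)||Z||², where || · || is the norm induced by B_θ. In particular Φ is proper. -/

import Mathlib

open scoped RealInnerProductSpace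

/-- The even part `∑_{k ≥ 0} A^{2k} / (2k)!` of `e^{A}`. -/
noncomputable def evenExpOp {g : Type*} [NormedAddCommGroup g] [NormedSpace ℝ g]
    (A : g →L[ℝ] g) : g →L[ℝ] g :=
  ∑' m : ℕ, ((Nat.factorial (2 * m) : ℝ))⁻¹ • A ^ (2 * m)

/-- The moment map `Φ : Z ↦ (exp(Z)·Λ₀)|_k ∈ k*`, defined by
`⟨Φ(Z), X⟩ = B_θ(z₀, ∑_{m ≥ 0} ad(Z)^{2m}/(2m)! X)` for `X ∈ k`,
where `ad(Z) = bracket Z`. -/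
noncomputable def PhiMap {g : Type*} [NormedAddCommGroup g] [InnerProductSpace ℝ g]
    [FiniteDimensional ℝ g] (bracket : g →ₗ[ℝ] g →ₗ[ℝ] g)
    (k : Submodule ℝ g) (z₀ : g) (Z : g) : ↥k →L[ℝ] ℝ :=
  ((innerSL ℝ z₀).comp
    (evenExpOp (LinearMap.toContinuousLinearMap (bracket Z)))).comp k.subtypeL

/-- `Λ₀ ∈ k*`, the element dual to `z₀` via the inner product. -/
noncomputable def Lam0 {g : Type*} [NormedAddCommGroup g] [InnerProductSpace ℝ g]
    (k : Submodule ℝ g) (z₀ : g) : ↥k →L[ℝ] ℝ :=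
  (innerSL ℝ z₀).comp k.subtypeL

open NormedSpace in
lemma evenExpOp_eq_exp {g : Type*} [NormedAddCommGroup g] [NormedSpace ℝ g] [CompleteSpace g]
    (A : g →L[ℝ] g) :
    evenExpOp A = (2⁻¹ : ℝ) • (exp A + exp (-A)) := by
  set f : ℕ → (g →L[ℝ] g) := fun n => ((n.factorial : ℝ))⁻¹ • A ^ n with hf
  have hsum : Summable f := expSeries_summable' A
  have hE : Summable fun m => f (2 * m) := hsum.comp_injective (fun a b h => by omega)
  have hO : Summable fun m => f (2 * m + 1) := hsum.comp_injective (fun a b h => by omega)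
  set E := ∑' m, f (2 * m) with hEdef
  set O := ∑' m, f (2 * m + 1) with hOdef
  have h1 : HasSum f (exp A) := exp_series_hasSum_exp' A
  have h1' : HasSum f (E + O) := hE.hasSum.even_add_odd hO.hasSum
  have keye : (fun m => (((2*m).factorial : ℝ))⁻¹ • (-A)^(2*m)) = fun m => f (2*m) := by
    funext m; rw [Even.neg_pow ⟨m, by ring⟩]
  have keyo : (fun m => (((2*m+1).factorial : ℝ))⁻¹ • (-A)^(2*m+1)) = fun m => -(f (2*m+1)) := by
    funext m; rw [Odd.neg_pow ⟨m, by ring⟩, smul_neg]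
  have h2 : HasSum (fun n => ((n.factorial : ℝ))⁻¹ • (-A) ^ n) (exp (-A)) :=
    exp_series_hasSum_exp' (-A)
  have h2' : HasSum (fun n => ((n.factorial : ℝ))⁻¹ • (-A) ^ n) (E - O) := by
    have := HasSum.even_add_odd (f := fun n => ((n.factorial : ℝ))⁻¹ • (-A) ^ n)
      (keye ▸ hE.hasSum) (keyo ▸ hO.hasSum.neg)
    simpa [sub_eq_add_neg] using this
  have hEA : exp A = E + O := h1.unique h1'
  have hEB : exp (-A) = E - O := h2.unique h2'
  have : evenExpOp A = E := rfl
  rw [this, hEA, hEB]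
  module

lemma pow_inner_symm {g : Type*} [NormedAddCommGroup g] [InnerProductSpace ℝ g]
    (A : g →L[ℝ] g) (hA : ∀ x y : g, ⟪A x, y⟫ = ⟪x, A y⟫) :
    ∀ (m : ℕ) (x y : g), ⟪(A ^ m) x, y⟫ = ⟪x, (A ^ m) y⟫ := by
  intro m
  induction m with
  | zero => intro x y; simp
  | succ n ih =>
    intro x y
    rw [pow_succ, ContinuousLinearMap.mul_apply]
    calc ⟪(A ^ n) (A x), y⟫ = ⟪A x, (A ^ n) y⟫ := ih _ _
      _ = ⟪x, A ((A ^ n) y)⟫ := hA _ _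
      _ = ⟪x, (A ^ (n + 1)) y⟫ := by
          rw [← ContinuousLinearMap.mul_apply, ← pow_succ']

set_option maxHeartbeats 1000000 in
set_option synthInstance.maxHeartbeats 400000 in
/-- Let `g = k ⊕ p` be a Cartan decomposition of a real semisimple Lie algebra with
inner product `B_θ` (the Lie bracket is the bilinear map `bracket`, `ad(Z) = bracket Z`
being `B_θ`-symmetric for `Z ∈ p`), and let `z₀ ∈ z(k)` satisfy `ad(z₀)²|_p = -id_p`.
Then the map `Φ : p → k*`, `⟨Φ(Z), X⟩ = B_θ(z₀, ∑_{m} ad(Z)^{2m}/(2m)! X)`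
(i.e. `Φ(Z) = (exp(Z)·Λ₀)|_k`), satisfies `⟨Φ(Z) - Λ₀, z₀⟩ ≥ ½‖Z‖²` for all `Z ∈ p`;
in particular `Φ` is proper. -/
theorem stmt15 (g : Type*) [NormedAddCommGroup g] [InnerProductSpace ℝ g]
    [FiniteDimensional ℝ g] (bracket : g →ₗ[ℝ] g →ₗ[ℝ] g)
    (hanti : ∀ x : g, bracket x x = 0)
    (hjacobi : ∀ x y z : g,
      bracket x (bracket y z) = bracket (bracket x y) z + bracket y (bracket x z))
    (k p : Submodule ℝ g) (hcompl : IsCompl k p)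
    (hkk : ∀ X ∈ k, ∀ Y ∈ k, bracket X Y ∈ k)
    (hkp : ∀ X ∈ k, ∀ Y ∈ p, bracket X Y ∈ p)
    (hpp : ∀ X ∈ p, ∀ Y ∈ p, bracket X Y ∈ k)
    (hsym : ∀ Z ∈ p, LinearMap.IsSymmetric (bracket Z))
    (z₀ : g) (hz₀ : z₀ ∈ k)
    (hcent : ∀ X ∈ k, bracket z₀ X = 0)
    (hsq : ∀ Y ∈ p, bracket z₀ (bracket z₀ Y) = -Y) :
    (∀ Z : ↥p, (1 / 2 : ℝ) * ‖(Z : g)‖ ^ 2 ≤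
      (PhiMap bracket k z₀ (Z : g) - Lam0 k z₀) ⟨z₀, hz₀⟩) ∧
    IsProperMap (fun Z : ↥p => PhiMap bracket k z₀ (Z : g)) := by
  have hanti2 : ∀ x y : g, bracket x y = - bracket y x := by
    intro x y
    have h := hanti (x + y)
    simp only [map_add, LinearMap.add_apply, hanti x, hanti y, zero_add, add_zero] at h
    exact eq_neg_of_add_eq_zero_right h
  have key : ∀ Z : ↥p, (1 / 2 : ℝ) * ‖(Z : g)‖ ^ 2 ≤
      (PhiMap bracket k z₀ (Z : g) - Lam0 k z₀) ⟨z₀, hz₀⟩ := by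
    intro Z
    set A : g →L[ℝ] g := LinearMap.toContinuousLinearMap (bracket (Z : g)) with hA
    have hAapp : ∀ x : g, A x = bracket (Z : g) x := fun x => rfl
    have hAsym : ∀ x y : g, ⟪A x, y⟫ = ⟪x, A y⟫ := fun x y => hsym _ Z.2 x y
    have hpow := pow_inner_symm A hAsym
    -- the norm identity ‖[Z, z₀]‖ = ‖Z‖
    have hAnorm : ⟪A z₀, A z₀⟫ = ⟪(Z : g), (Z : g)⟫ := by
      set W := bracket z₀ (Z : g) with hWdef
      have hWp : W ∈ p := hkp z₀ hz₀ _ Z.2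
      have hWz : bracket W z₀ = (Z : g) := by
        rw [hanti2 W z₀, hWdef, hsq _ Z.2, neg_neg]
      have hZz : A z₀ = -W := by rw [hAapp, hanti2]
      have e1 : ⟪(Z : g), (Z : g)⟫ = ⟪z₀, bracket W (Z : g)⟫ := by
        have := hsym W hWp z₀ (Z : g)
        rwa [hWz] at this
      have e2 : ⟪bracket (Z : g) W, z₀⟫ = ⟪W, bracket (Z : g) z₀⟫ := hsym _ Z.2 W z₀
      rw [hanti2 (Z : g) W, ← hAapp, hZz] at e2
      have e3 : ⟪W, W⟫ = ⟪(Z : g), (Z : g)⟫ := by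
        have h4 : -⟪bracket W (Z : g), z₀⟫ = -⟪W, W⟫ := by
          simpa [inner_neg_left, inner_neg_right] using e2
        have h5 : ⟪bracket W (Z : g), z₀⟫ = ⟪z₀, bracket W (Z : g)⟫ := real_inner_comm _ _
        rw [h5, ← e1] at h4
        linarith
      rw [hZz, inner_neg_neg]
      exact e3
    -- summability of the operator series
    have hsumOp : Summable (fun m : ℕ => ((Nat.factorial (2 * m) : ℝ))⁻¹ • A ^ (2 * m)) :=
      (NormedSpace.expSeries_summable' (𝕂 := ℝ) A).comp_injective (fun a b h => by omega)
    -- evaluate the operator tsum at z₀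
    have happ : evenExpOp A z₀
        = ∑' m : ℕ, ((Nat.factorial (2 * m) : ℝ))⁻¹ • (A ^ (2 * m)) z₀ := by
      have := (ContinuousLinearMap.apply ℝ g z₀).map_tsum hsumOp
      simpa [evenExpOp] using this
    have hsumv : Summable (fun m : ℕ => ((Nat.factorial (2 * m) : ℝ))⁻¹ • (A ^ (2 * m)) z₀) := by
      have := hsumOp.map (ContinuousLinearMap.apply ℝ g z₀).toLinearMap.toAddMonoidHom
        (ContinuousLinearMap.apply ℝ g z₀).continuous
      simpa [Function.comp_def] using this
    set s : ℕ → ℝ := fun m => ((Nat.factorial (2 * m) : ℝ))⁻¹ * ‖(A ^ m) z₀‖ ^ 2 with hs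
    have hterm : ∀ m : ℕ, ⟪z₀, ((Nat.factorial (2 * m) : ℝ))⁻¹ • (A ^ (2 * m)) z₀⟫ = s m := by
      intro m
      rw [real_inner_smul_right]
      congr 1
      have h2m : (2 * m) = m + m := by ring
      rw [h2m, pow_add, ContinuousLinearMap.mul_apply, ← hpow m, real_inner_self_eq_norm_sq]
    have hts : ⟪z₀, evenExpOp A z₀⟫ = ∑' m, s m := by
      rw [happ]
      have := (innerSL ℝ z₀).map_tsum hsumv
      simp only [innerSL_apply_apply] at this
      calc ⟪z₀, ∑' m : ℕ, ((Nat.factorial (2 * m) : ℝ))⁻¹ • (A ^ (2 * m)) z₀⟫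
          = ∑' m : ℕ, ⟪z₀, ((Nat.factorial (2 * m) : ℝ))⁻¹ • (A ^ (2 * m)) z₀⟫ := this
        _ = ∑' m, s m := by exact tsum_congr hterm
    have hssum : Summable s := by
      have := hsumv.map (innerSL ℝ z₀).toLinearMap.toAddMonoidHom (innerSL ℝ z₀).continuous
      refine this.congr ?_
      intro m
      exact hterm m
    have hnonneg : ∀ m, 0 ≤ s m := by
      intro m
      apply mul_nonneg (by positivity) (by positivity)
    have hsum01 : s 0 + s 1 ≤ ∑' m, s m := by
      have := Summable.sum_le_tsum (Finset.range 2) (fun m _ => hnonneg m) hssum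
      simpa [Finset.sum_range_succ] using this
    have hs0 : s 0 = ‖z₀‖ ^ 2 := by simp [hs]
    have hs1 : s 1 = (1 / 2 : ℝ) * ‖(Z : g)‖ ^ 2 := by
      have : ‖A z₀‖ ^ 2 = ‖(Z : g)‖ ^ 2 := by
        rw [← real_inner_self_eq_norm_sq, ← real_inner_self_eq_norm_sq]
        exact hAnorm
      simp only [hs, pow_one]
      rw [this]
      norm_num [Nat.factorial]
    -- unfold the left-hand side
    have hlhs : (PhiMap bracket k z₀ (Z : g) - Lam0 k z₀) ⟨z₀, hz₀⟩
        = ⟪z₀, evenExpOp A z₀⟫ - ⟪z₀, z₀⟫ := by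
      simp [PhiMap, Lam0, ContinuousLinearMap.sub_apply, hA]
    rw [hlhs, hts, real_inner_self_eq_norm_sq, ← hs0, ← hs1]
    linarith
  refine ⟨key, ?_⟩
  -- continuity of Φ
  have hcont : Continuous (fun Z : ↥p => PhiMap bracket k z₀ (Z : g)) := by
    have hcs : CompleteSpace g := FiniteDimensional.complete ℝ g
    let L : g →ₗ[ℝ] (g →L[ℝ] g) :=
      { toFun := fun x => LinearMap.toContinuousLinearMap (bracket x)
        map_add' := by intro x y; ext v; simp
        map_smul' := by intro c x; ext v; simp }
    have hL : Continuous fun x : g =>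
        (LinearMap.toContinuousLinearMap (bracket x) : g →L[ℝ] g) :=
      L.continuous_of_finiteDimensional
    have hcexp : Continuous (fun T : g →L[ℝ] g => evenExpOp T) := by
      simp only [evenExpOp_eq_exp]
      have hexpc : Continuous (NormedSpace.exp : (g →L[ℝ] g) → (g →L[ℝ] g)) :=
        continuous_iff_continuousAt.2 fun x => (NormedSpace.exp_analytic (𝕂 := ℝ) x).continuousAt
      exact (continuous_const (y := (2⁻¹ : ℝ))).smul (hexpc.add
        (hexpc.comp (continuous_neg : Continuous fun T : g →L[ℝ] g => -T)))
    show Continuous fun Z : ↥p =>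
      ((innerSL ℝ z₀).comp
        (evenExpOp (LinearMap.toContinuousLinearMap (bracket (Z : g))))).comp k.subtypeL
    exact (continuous_const.clm_comp
      (hcexp.comp (hL.comp continuous_subtype_val))).clm_comp continuous_const
  by_cases hz : z₀ = 0
  · -- degenerate case: p = 0, the domain is compact
    have hp0 : ∀ Y ∈ p, Y = 0 := by
      intro Y hY
      have := hsq Y hY
      rw [hz] at this
      simp only [map_zero, LinearMap.zero_apply] at this
      simpa using this.symm
    have hsub : Subsingleton ↥p :=
      ⟨fun a b => Subtype.ext (by rw [hp0 a a.2, hp0 b b.2])⟩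
    have : Finite ↥p := Finite.of_subsingleton
    have : CompactSpace ↥p := Finite.compactSpace
    exact hcont.isProperMap
  · rw [isProperMap_iff_tendsto_cocompact]
    refine ⟨hcont, ?_⟩
    haveI : FiniteDimensional ℝ (↥k →L[ℝ] ℝ) := inferInstance
    haveI : ProperSpace (↥k →L[ℝ] ℝ) := FiniteDimensional.proper ℝ (↥k →L[ℝ] ℝ)
    rw [← Metric.cobounded_eq_cocompact (α := ↥p),
      ← Metric.cobounded_eq_cocompact (α := ↥k →L[ℝ] ℝ), ← comap_norm_atTop (E := ↥k →L[ℝ] ℝ),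
      Filter.tendsto_comap_iff]
    have hz0 : (0 : ℝ) < ‖z₀‖ := norm_pos_iff.mpr hz
    have hbound : ∀ Z : ↥p,
        ‖(Z : g)‖ ^ 2 / 2 / ‖z₀‖ ≤ ‖PhiMap bracket k z₀ (Z : g)‖ := by
      intro Z
      have h1 := key Z
      have h2 : (Lam0 k z₀) ⟨z₀, hz₀⟩ = ‖z₀‖ ^ 2 := by
        simp [Lam0, real_inner_self_eq_norm_sq]
      have hnormz : ‖(⟨z₀, hz₀⟩ : ↥k)‖ = ‖z₀‖ := rfl
      have h3 : (PhiMap bracket k z₀ (Z : g)) ⟨z₀, hz₀⟩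
          ≤ ‖PhiMap bracket k z₀ (Z : g)‖ * ‖z₀‖ := by
        calc (PhiMap bracket k z₀ (Z : g)) ⟨z₀, hz₀⟩
            ≤ ‖(PhiMap bracket k z₀ (Z : g)) ⟨z₀, hz₀⟩‖ := Real.le_norm_self _
          _ ≤ ‖PhiMap bracket k z₀ (Z : g)‖ * ‖(⟨z₀, hz₀⟩ : ↥k)‖ :=
              (PhiMap bracket k z₀ (Z : g)).le_opNorm _
          _ = ‖PhiMap bracket k z₀ (Z : g)‖ * ‖z₀‖ := by rw [hnormz]
      rw [ContinuousLinearMap.sub_apply, h2] at h1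
      rw [div_le_iff₀ hz0]
      nlinarith [sq_nonneg ‖z₀‖]
    apply Filter.tendsto_atTop_mono hbound
    have hnorm : Filter.Tendsto (fun Z : ↥p => ‖Z‖) (Bornology.cobounded ↥p) Filter.atTop :=
      tendsto_norm_cobounded_atTop
    have hq : Filter.Tendsto (fun x : ℝ => x ^ 2 / 2 / ‖z₀‖) Filter.atTop Filter.atTop :=
      ((Filter.tendsto_pow_atTop two_ne_zero).atTop_div_const (by norm_num)).atTop_div_const hz0
    have hval : (fun Z : ↥p => ‖(Z : g)‖ ^ 2 / 2 / ‖z₀‖)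
        = (fun x : ℝ => x ^ 2 / 2 / ‖z₀‖) ∘ (fun Z : ↥p => ‖Z‖) := rfl
    rw [hval]
    exact hq.comp hnorm
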